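/- Let R be a G-graded ring such that every graded-regular element of R is central and the only idempotents of R_e are 0 and 1. If R is graded NR-clean, then R is graded nil-good, i.e., every homogeneous element is either nilpotent or a sum of a homogeneous unit and a homogeneous nilpotent. -/

import Mathlib

/-- An element is homogeneous w.r.t. a grading family `𝒜` if it lies in some component. -/
def Homogeneous {G : Type*} [Group G] {R : Type*} [Ring R]
    (𝒜 : G → AddSubgroup R) (x : R) : Prop := ∃ g, x ∈ 𝒜 g

/-- A graded-regular element: homogeneous `r` with `r = r * a * r` for some homogeneous `a`. -/
def GradedRegular {G : Type*} [Group G] {R : Type*} [Ring R]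
    (𝒜 : G → AddSubgroup R) (r : R) : Prop :=
  Homogeneous 𝒜 r ∧ ∃ a : R, Homogeneous 𝒜 a ∧ r = r * a * r

/-- Graded NR-clean: every homogeneous element is a sum of a graded-regular element
and a homogeneous nilpotent element. -/
def GradedNRClean {G : Type*} [Group G] {R : Type*} [Ring R]
    (𝒜 : G → AddSubgroup R) : Prop :=
  ∀ x : R, Homogeneous 𝒜 x →
    ∃ r n : R, GradedRegular 𝒜 r ∧ Homogeneous 𝒜 n ∧ IsNilpotent n ∧ x = r + n

/-- `𝒜` is a `G`-grading of the ring `R`. -/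
structure IsGrading {G : Type*} [Group G] [DecidableEq G] {R : Type*} [Ring R]
    (𝒜 : G → AddSubgroup R) : Prop where
  one_mem : (1 : R) ∈ 𝒜 1
  mul_mem : ∀ {g h : G} {a b : R}, a ∈ 𝒜 g → b ∈ 𝒜 h → a * b ∈ 𝒜 (g * h)
  isInternal : DirectSum.IsInternal 𝒜

lemma mem_ne_eq_zero {G : Type*} [Group G] [DecidableEq G] {R : Type*} [Ring R]
    {𝒜 : G → AddSubgroup R} (hG : DirectSum.IsInternal 𝒜) {i j : G} (hij : i ≠ j)
    {x : R} (hi : x ∈ 𝒜 i) (hj : x ∈ 𝒜 j) : x = 0 := by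
  have h1 : DirectSum.coeAddMonoidHom 𝒜 (DirectSum.of (fun g => 𝒜 g) i ⟨x, hi⟩) = x := by
    simp [DirectSum.coeAddMonoidHom_of]
  have h2 : DirectSum.coeAddMonoidHom 𝒜 (DirectSum.of (fun g => 𝒜 g) j ⟨x, hj⟩) = x := by
    simp [DirectSum.coeAddMonoidHom_of]
  have := hG.injective (h1.trans h2.symm)
  have := congrArg (fun f => (f i : 𝒜 i)) this
  simp only [DirectSum.of_eq_same, DirectSum.of_eq_of_ne _ _ _ hij] at this
  exact congrArg Subtype.val this

/-- If every graded-regular element is central and `0, 1` are the only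
idempotents of `R_e`, then graded NR-clean implies graded nil-good. -/
theorem stmt5 {G : Type*} [Group G] [DecidableEq G] {R : Type*} [Ring R]
    (𝒜 : G → AddSubgroup R) (hG : IsGrading 𝒜)
    (hcentral : ∀ r : R, GradedRegular 𝒜 r → r ∈ Set.center R)
    (hidem : ∀ x ∈ 𝒜 1, x * x = x → x = 0 ∨ x = 1)
    (h : GradedNRClean 𝒜) :
    ∀ x : R, Homogeneous 𝒜 x → IsNilpotent x ∨
      ∃ u n : R, IsUnit u ∧ Homogeneous 𝒜 u ∧ IsNilpotent n ∧ Homogeneous 𝒜 n ∧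
        x = u + n := by
  intro x hx
  obtain ⟨r, n, hrreg, hnhom, hnnil, hxrn⟩ := h x hx
  obtain ⟨⟨g, hrg⟩, a, ⟨k, hak⟩, hr⟩ := hrreg
  by_cases hr0 : r = 0
  · left; rw [hxrn, hr0, zero_add]; exact hnnil
  · right
    have hcomm : ∀ b : R, r * b = b * r :=
      fun b => (hcentral r ⟨⟨g, hrg⟩, a, ⟨k, hak⟩, hr⟩).comm b
    have hee : (r * a) * (r * a) = r * a := by nth_rewrite 3 [hr]; noncomm_ring
    have hemem : r * a ∈ 𝒜 (g * k) := hG.mul_mem hrg hak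
    have her : (r * a) * r = r := hr.symm
    have hgk : g * k = 1 := by
      by_contra hgk
      have hne : g * k ≠ (g * k) * (g * k) := fun hcontra =>
        hgk (by simpa using (mul_left_cancel (a := g * k) (b := (1:G)) (c := g * k)
          (by simpa using hcontra.symm)).symm)
      have h0 := mem_ne_eq_zero hG.isInternal hne hemem (hee ▸ hG.mul_mem hemem hemem)
      exact hr0 (by rw [← her, h0, zero_mul])
    rcases hidem (r * a) (hgk ▸ hemem) hee with he0 | he1
    · exact absurd (by rw [← her, he0, zero_mul]) hr0
    · have har : a * r = 1 := by rw [← hcomm a, he1]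
      exact ⟨r, n, ⟨⟨r, a, he1, har⟩, rfl⟩, ⟨g, hrg⟩, hnnil, hnhom, hxrn⟩
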